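/- Fix T > 0, σ > 0, σ₀ ≥ 0 and θ ≠ 0, and let c be the Ornstein–Uhlenbeck bridge covariance. Let f : [0,T] → ℝ be continuous and let g : [0,T] → ℝ be twice continuously differentiable such that: (i) g''(s) − θ² g(s) = −σ² f(s) for all s ∈ [0,T]; (ii) g(T) = 0; (iii) σ₀² g'(0) = (σ² − θσ₀²) g(0). Then g(s) = ∫₀ᵀ c(s,t) f(t) dt for all s ∈ [0,T]. -/

import Mathlib

open Real Set intervalIntegral

noncomputable def ouU (σ σ₀ θ t : ℝ) : ℝ :=
  σ^2 * Real.exp (θ*t) + (2*θ*σ₀^2 - σ^2) * Real.exp (-θ*t)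

noncomputable def ouU' (σ σ₀ θ t : ℝ) : ℝ :=
  θ * σ^2 * Real.exp (θ*t) - θ * (2*θ*σ₀^2 - σ^2) * Real.exp (-θ*t)

noncomputable def ouV (T σ σ₀ θ t : ℝ) : ℝ :=
  Real.exp (-θ*t) - (Real.exp (-θ*T) / ouU σ σ₀ θ T) * ouU σ σ₀ θ t

noncomputable def ouV' (T σ σ₀ θ t : ℝ) : ℝ :=
  -θ * Real.exp (-θ*t) - (Real.exp (-θ*T) / ouU σ σ₀ θ T) * ouU' σ σ₀ θ t

lemma expDeriv (θ t : ℝ) :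
    HasDerivAt (fun t => Real.exp (θ*t)) (Real.exp (θ*t) * θ) t := by
  simpa using ((hasDerivAt_id t).const_mul θ).exp

lemma ouU_deriv (σ σ₀ θ t : ℝ) : HasDerivAt (ouU σ σ₀ θ) (ouU' σ σ₀ θ t) t := by
  have h1 := expDeriv θ t
  have h2 : HasDerivAt (fun t => Real.exp (-θ*t)) (Real.exp (-θ*t) * (-θ)) t := by
    simpa using expDeriv (-θ) t
  have := (h1.const_mul (σ^2)).add (h2.const_mul (2*θ*σ₀^2 - σ^2))
  refine this.congr_deriv ?_
  simp only [ouU']; ring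

lemma ouU'_deriv (σ σ₀ θ t : ℝ) :
    HasDerivAt (ouU' σ σ₀ θ) (θ^2 * ouU σ σ₀ θ t) t := by
  have h1 := expDeriv θ t
  have h2 : HasDerivAt (fun t => Real.exp (-θ*t)) (Real.exp (-θ*t) * (-θ)) t := by
    simpa using expDeriv (-θ) t
  have := (h1.const_mul (θ*σ^2)).sub (h2.const_mul (θ*(2*θ*σ₀^2 - σ^2)))
  refine this.congr_deriv ?_
  simp only [ouU]; ring

lemma ouV_deriv (T σ σ₀ θ t : ℝ) : HasDerivAt (ouV T σ σ₀ θ) (ouV' T σ σ₀ θ t) t := by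
  have h2 : HasDerivAt (fun t => Real.exp (-θ*t)) (Real.exp (-θ*t) * (-θ)) t := by
    simpa using expDeriv (-θ) t
  have := h2.sub ((ouU_deriv σ σ₀ θ t).const_mul (Real.exp (-θ*T) / ouU σ σ₀ θ T))
  refine this.congr_deriv ?_
  simp only [ouV']; ring

lemma ouV'_deriv (T σ σ₀ θ t : ℝ) :
    HasDerivAt (ouV' T σ σ₀ θ) (θ^2 * ouV T σ σ₀ θ t) t := by
  have h2 : HasDerivAt (fun t => Real.exp (-θ*t)) (Real.exp (-θ*t) * (-θ)) t := by
    simpa using expDeriv (-θ) t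
  have := (h2.const_mul (-θ)).sub
    ((ouU'_deriv σ σ₀ θ t).const_mul (Real.exp (-θ*T) / ouU σ σ₀ θ T))
  refine this.congr_deriv ?_
  simp only [ouV, ouU]; ring

lemma ouU_cont (σ σ₀ θ : ℝ) : Continuous (ouU σ σ₀ θ) :=
  continuous_iff_continuousAt.2 fun t => (ouU_deriv σ σ₀ θ t).continuousAt

lemma ouV_cont (T σ σ₀ θ : ℝ) : Continuous (ouV T σ σ₀ θ) :=
  continuous_iff_continuousAt.2 fun t => (ouV_deriv T σ σ₀ θ t).continuousAt

lemma ouU_T_ne (T σ σ₀ θ : ℝ) (hT : 0 < T) (hσ : 0 < σ) (hθ : θ ≠ 0) :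
    ouU σ σ₀ θ T ≠ 0 := by
  rcases hθ.lt_or_gt with h | h
  · have h1 : Real.exp (θ*T) < Real.exp (-θ*T) := by
      apply Real.exp_lt_exp.2; nlinarith
    have h2 : (0:ℝ) < Real.exp (-θ*T) := Real.exp_pos _
    have : ouU σ σ₀ θ T < 0 := by
      simp only [ouU]
      nlinarith [mul_lt_mul_of_pos_left h1 (pow_pos hσ 2), mul_nonneg (sq_nonneg σ₀) h2.le, h.le]
    linarith [this]
  · have h1 : Real.exp (-θ*T) < Real.exp (θ*T) := by
      apply Real.exp_lt_exp.2; nlinarith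
    have h2 : (0:ℝ) < Real.exp (-θ*T) := Real.exp_pos _
    have : 0 < ouU σ σ₀ θ T := by
      simp only [ouU]
      nlinarith [mul_lt_mul_of_pos_left h1 (pow_pos hσ 2), mul_nonneg (sq_nonneg σ₀) h2.le, h.le]
    linarith [this]

lemma ouWronskian (T σ σ₀ θ s : ℝ) :
    ouV T σ σ₀ θ s * ouU' σ σ₀ θ s - ouU σ σ₀ θ s * ouV' T σ σ₀ θ s = 2*θ*σ^2 := by
  have h : Real.exp (-θ*s) * Real.exp (θ*s) = 1 := by
    rw [← Real.exp_add]; simp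
  simp only [ouV, ouV', ouU, ouU']
  linear_combination (2*θ*σ^2) * h

lemma ibp_key (T σ θ : ℝ)
    (f g g' g'' : ℝ → ℝ) (hf : ContinuousOn f (Icc (0:ℝ) T))
    (hg' : ∀ s ∈ Icc (0:ℝ) T, HasDerivWithinAt g (g' s) (Icc (0:ℝ) T) s)
    (hg'' : ∀ s ∈ Icc (0:ℝ) T, HasDerivWithinAt g' (g'' s) (Icc (0:ℝ) T) s)
    (hg'cont : ContinuousOn g' (Icc (0:ℝ) T))
    (hode : ∀ s ∈ Icc (0:ℝ) T, g'' s - θ^2 * g s = -(σ^2) * f s)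
    (φ φ' : ℝ → ℝ) (hφ : ∀ t, HasDerivAt φ (φ' t) t)
    (hφ' : ∀ t, HasDerivAt φ' (θ^2 * φ t) t)
    (hφc : Continuous φ)
    (a b : ℝ) (hab : a ≤ b) (ha : a ∈ Icc (0:ℝ) T) (hb : b ∈ Icc (0:ℝ) T) :
    ∫ t in a..b, φ t * (σ^2 * f t) =
      (φ' b * g b - φ b * g' b) - (φ' a * g a - φ a * g' a) := by
  have hsub : Icc a b ⊆ Icc (0:ℝ) T := Icc_subset_Icc ha.1 hb.2
  have hgcont : ContinuousOn g (Icc (0:ℝ) T) := fun x hx =>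
    (hg' x hx).continuousWithinAt
  have hφ'c : Continuous φ' :=
    continuous_iff_continuousAt.2 fun t => (hφ' t).continuousAt
  set F : ℝ → ℝ := fun t => φ' t * g t - φ t * g' t with hF
  have hFcont : ContinuousOn F (Icc a b) :=
    ((hφ'c.continuousOn.mul (hgcont.mono hsub)).sub
      (hφc.continuousOn.mul (hg'cont.mono hsub)))
  have hderiv : ∀ x ∈ Ioo a b, HasDerivWithinAt F (φ x * (σ^2 * f x)) (Ioi x) x := by
    intro x hx
    have hxI : x ∈ Icc (0:ℝ) T := hsub (Ioo_subset_Icc_self hx)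
    have hnx : Icc (0:ℝ) T ∈ nhds x := by
      apply Icc_mem_nhds
      · exact lt_of_le_of_lt ha.1 hx.1
      · exact lt_of_lt_of_le hx.2 hb.2
    have hg1 : HasDerivAt g (g' x) x := (hg' x hxI).hasDerivAt hnx
    have hg2 : HasDerivAt g' (g'' x) x := (hg'' x hxI).hasDerivAt hnx
    have hD : HasDerivAt F ((θ^2 * φ x) * g x + φ' x * g' x -
        (φ' x * g' x + φ x * g'' x)) x :=
      ((hφ' x).mul hg1).sub ((hφ x).mul hg2)
    have heq : (θ^2 * φ x) * g x + φ' x * g' x - (φ' x * g' x + φ x * g'' x)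
        = φ x * (σ^2 * f x) := by
      have := hode x hxI
      linear_combination (-(φ x)) * this
    rw [heq] at hD
    exact hD.hasDerivWithinAt
  have hint : IntervalIntegrable (fun t => φ t * (σ^2 * f t)) MeasureTheory.volume a b := by
    apply ContinuousOn.intervalIntegrable
    apply ContinuousOn.mul (hφc.continuousOn)
    apply ContinuousOn.mul continuousOn_const
    have : uIcc a b = Icc a b := uIcc_of_le hab
    rw [this]
    exact hf.mono hsub
  have := intervalIntegral.integral_eq_sub_of_hasDeriv_right_of_le hab hFcont hderiv hint
  simpa [hF] using this


/-- converse of the boundary value problem characterization: a C²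
function g on [0,T] satisfying g'' − θ²g = −σ²f, g(T) = 0 and
σ₀² g'(0) = (σ² − θσ₀²) g(0) is the image of f under the Ornstein–Uhlenbeck
bridge covariance operator. -/
theorem ou_bridge_covariance_operator_bvp_converse
    (T σ σ₀ θ : ℝ) (hT : 0 < T) (hσ : 0 < σ) (hσ₀ : 0 ≤ σ₀) (hθ : θ ≠ 0)
    (c : ℝ → ℝ → ℝ)
    (hc : ∀ s t : ℝ, c s t = (1/(2*θ)) * Real.exp (-θ*(s+t)) *
        ((2*θ*σ₀^2 - σ^2) + σ^2 * Real.exp (2*θ*(min s t)))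
      - (1/(2*θ)) * Real.exp (-θ*T) *
        ((σ^2 * Real.exp (θ*t) + (2*θ*σ₀^2 - σ^2) * Real.exp (-θ*t)) *
         (σ^2 * Real.exp (θ*s) + (2*θ*σ₀^2 - σ^2) * Real.exp (-θ*s))) /
        (σ^2 * Real.exp (θ*T) + (2*θ*σ₀^2 - σ^2) * Real.exp (-θ*T)))
    (f : ℝ → ℝ) (hf : ContinuousOn f (Icc (0:ℝ) T))
    (g g' g'' : ℝ → ℝ)
    (hg' : ∀ s ∈ Icc (0:ℝ) T, HasDerivWithinAt g (g' s) (Icc (0:ℝ) T) s)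
    (hg'' : ∀ s ∈ Icc (0:ℝ) T, HasDerivWithinAt g' (g'' s) (Icc (0:ℝ) T) s)
    (hg'cont : ContinuousOn g' (Icc (0:ℝ) T))
    (hg''cont : ContinuousOn g'' (Icc (0:ℝ) T))
    (hode : ∀ s ∈ Icc (0:ℝ) T, g'' s - θ^2 * g s = -(σ^2) * f s)
    (hgT : g T = 0)
    (hbd : σ₀^2 * g' 0 = (σ^2 - θ*σ₀^2) * g 0) :
    ∀ s ∈ Icc (0:ℝ) T, g s = ∫ t in (0:ℝ)..T, c s t * f t := by
  intro s hs
  have hUT : ouU σ σ₀ θ T ≠ 0 := ouU_T_ne T σ σ₀ θ hT hσ hθ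
  have hσ2 : σ^2 ≠ 0 := pow_ne_zero 2 hσ.ne'
  have h2θ : (2*θ) ≠ 0 := by positivity
  -- key formulas for the kernel
  have hkey1 : ∀ t : ℝ, t ≤ s → c s t = (1/(2*θ)) * ouU σ σ₀ θ t * ouV T σ σ₀ θ s := by
    intro t ht
    have hmin : min s t = t := min_eq_right ht
    have h1 : Real.exp (-θ*(s+t)) = Real.exp (-θ*s) * Real.exp (-θ*t) := by
      rw [← Real.exp_add]; ring_nf
    have h2 : Real.exp (-θ*t) * Real.exp (2*θ*t) = Real.exp (θ*t) := by
      rw [← Real.exp_add]; ring_nf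
    rw [hc, hmin]
    simp only [ouU, ouV]
    linear_combination (1/(2*θ)) * ((2*θ*σ₀^2 - σ^2) + σ^2 * Real.exp (2*θ*t)) * h1
      + (σ^2/(2*θ)) * Real.exp (-θ*s) * h2
  have hkey2 : ∀ t : ℝ, s ≤ t → c s t = (1/(2*θ)) * ouU σ σ₀ θ s * ouV T σ σ₀ θ t := by
    intro t ht
    have hmin : min s t = s := min_eq_left ht
    have h1 : Real.exp (-θ*(s+t)) = Real.exp (-θ*t) * Real.exp (-θ*s) := by
      rw [← Real.exp_add]; ring_nf
    have h2 : Real.exp (-θ*s) * Real.exp (2*θ*s) = Real.exp (θ*s) := by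
      rw [← Real.exp_add]; ring_nf
    rw [hc, hmin]
    simp only [ouU, ouV]
    linear_combination (1/(2*θ)) * ((2*θ*σ₀^2 - σ^2) + σ^2 * Real.exp (2*θ*s)) * h1
      + (σ^2/(2*θ)) * Real.exp (-θ*t) * h2
  -- continuity / integrability
  have hccont : ContinuousOn (fun t => c s t * f t) (Icc (0:ℝ) T) := by
    apply ContinuousOn.mul _ hf
    have he : (fun t : ℝ => c s t) = fun t => (1/(2*θ)) * Real.exp (-θ*(s+t)) *
        ((2*θ*σ₀^2 - σ^2) + σ^2 * Real.exp (2*θ*(min s t)))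
      - (1/(2*θ)) * Real.exp (-θ*T) *
        ((σ^2 * Real.exp (θ*t) + (2*θ*σ₀^2 - σ^2) * Real.exp (-θ*t)) *
         (σ^2 * Real.exp (θ*s) + (2*θ*σ₀^2 - σ^2) * Real.exp (-θ*s))) /
        (σ^2 * Real.exp (θ*T) + (2*θ*σ₀^2 - σ^2) * Real.exp (-θ*T)) :=
      funext fun t => hc s t
    apply ContinuousOn.congr (f := fun t : ℝ => (1/(2*θ)) * Real.exp (-θ*(s+t)) *
        ((2*θ*σ₀^2 - σ^2) + σ^2 * Real.exp (2*θ*(min s t)))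
      - (1/(2*θ)) * Real.exp (-θ*T) *
        ((σ^2 * Real.exp (θ*t) + (2*θ*σ₀^2 - σ^2) * Real.exp (-θ*t)) *
         (σ^2 * Real.exp (θ*s) + (2*θ*σ₀^2 - σ^2) * Real.exp (-θ*s))) /
        (σ^2 * Real.exp (θ*T) + (2*θ*σ₀^2 - σ^2) * Real.exp (-θ*T)))
    · apply Continuous.continuousOn; fun_prop
    · exact fun t _ => hc s t
  have h1int : IntervalIntegrable (fun t => c s t * f t) MeasureTheory.volume 0 s :=
    (hccont.mono (by rw [uIcc_of_le hs.1]; exact Icc_subset_Icc le_rfl hs.2)).intervalIntegrable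
  have h2int : IntervalIntegrable (fun t => c s t * f t) MeasureTheory.volume s T :=
    (hccont.mono (by rw [uIcc_of_le hs.2]; exact Icc_subset_Icc hs.1 le_rfl)).intervalIntegrable
  have hsplit : (∫ t in (0:ℝ)..s, c s t * f t) + ∫ t in s..T, c s t * f t
      = ∫ t in (0:ℝ)..T, c s t * f t :=
    integral_add_adjacent_intervals h1int h2int
  -- first integral
  have e1 : (∫ t in (0:ℝ)..s, c s t * f t) = (ouV T σ σ₀ θ s / (2*θ*σ^2)) *
      ((ouU' σ σ₀ θ s * g s - ouU σ σ₀ θ s * g' s)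
        - (ouU' σ σ₀ θ 0 * g 0 - ouU σ σ₀ θ 0 * g' 0)) := by
    have hcg : EqOn (fun t => c s t * f t)
        (fun t => (ouV T σ σ₀ θ s / (2*θ*σ^2)) * (ouU σ σ₀ θ t * (σ^2 * f t)))
        (uIcc (0:ℝ) s) := by
      intro t ht
      rw [uIcc_of_le hs.1] at ht
      simp only
      rw [hkey1 t ht.2]
      field_simp
    rw [intervalIntegral.integral_congr hcg, intervalIntegral.integral_const_mul,
      ibp_key T σ θ f g g' g'' hf hg' hg'' hg'cont hode (ouU σ σ₀ θ) (ouU' σ σ₀ θ)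
        (ouU_deriv σ σ₀ θ) (ouU'_deriv σ σ₀ θ) (ouU_cont σ σ₀ θ) 0 s hs.1
        ⟨le_rfl, hT.le⟩ hs]
  -- second integral
  have e2 : (∫ t in s..T, c s t * f t) = (ouU σ σ₀ θ s / (2*θ*σ^2)) *
      ((ouV' T σ σ₀ θ T * g T - ouV T σ σ₀ θ T * g' T)
        - (ouV' T σ σ₀ θ s * g s - ouV T σ σ₀ θ s * g' s)) := by
    have hcg : EqOn (fun t => c s t * f t)
        (fun t => (ouU σ σ₀ θ s / (2*θ*σ^2)) * (ouV T σ σ₀ θ t * (σ^2 * f t)))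
        (uIcc s T) := by
      intro t ht
      rw [uIcc_of_le hs.2] at ht
      simp only
      rw [hkey2 t ht.1]
      field_simp
    rw [intervalIntegral.integral_congr hcg, intervalIntegral.integral_const_mul,
      ibp_key T σ θ f g g' g'' hf hg' hg'' hg'cont hode (ouV T σ σ₀ θ) (ouV' T σ σ₀ θ)
        (ouV_deriv T σ σ₀ θ) (ouV'_deriv T σ σ₀ θ) (ouV_cont T σ σ₀ θ) s T hs.2
        hs ⟨hT.le, le_rfl⟩]
  rw [← hsplit, e1, e2]
  have hVT : ouV T σ σ₀ θ T = 0 := by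
    simp only [ouV]; field_simp; simp
  have hU0 : ouU σ σ₀ θ 0 = 2*θ*σ₀^2 := by
    simp only [ouU]; simp; try ring
  have hU'0 : ouU' σ σ₀ θ 0 = 2*θ*(σ^2 - θ*σ₀^2) := by
    simp only [ouU']; simp; try ring
  have hW := ouWronskian T σ σ₀ θ s
  rw [hgT, hVT, hU0, hU'0]
  field_simp
  linear_combination (-(g s)) * hW - (2*θ*ouV T σ σ₀ θ s) * hbd
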